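/- (Connectivity preserved along a sequence of safe moves.) Let P₀ ⊆ ℤ² be a finite set whose proximity graph is connected, and let P₀, P₁, …, P_m be a sequence of configurations such that for each k < m there exist p ∈ P_k and q ∉ P_k with P_{k+1} = (P_k \ {p}) ∪ {q} and every r ∈ P_k \ {p} at Chebyshev distance 1 from p is at Chebyshev distance 1 from q. Then the proximity graph of P_m is connected. -/

import Mathlib

/-- Chebyshev distance on the grid `ℤ²`. -/
def chebDist (p q : ℤ × ℤ) : ℤ := max |p.1 - q.1| |p.2 - q.2|

/-- The proximity graph of a configuration `P ⊆ ℤ²`: two occupied grid points are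
adjacent iff their Chebyshev distance is `1` (Moore neighborhood). -/
def proxGraph (P : Set (ℤ × ℤ)) : SimpleGraph P where
  Adj a b := chebDist a.1 b.1 = 1
  symm := by
    constructor
    intro a b h
    unfold chebDist at *
    rw [abs_sub_comm (b.1).1 (a.1).1, abs_sub_comm (b.1).2 (a.1).2]
    exact h
  loopless := by
    constructor
    intro a h
    simp [chebDist] at h

lemma chebDist_comm (p q : ℤ × ℤ) : chebDist p q = chebDist q p := by
  unfold chebDist
  rw [abs_sub_comm p.1 q.1, abs_sub_comm p.2 q.2]

lemma safe_move_step (Q : Set (ℤ × ℤ)) (p q : ℤ × ℤ) (hp : p ∈ Q) (hq : q ∉ Q)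
    (hsafe : ∀ r ∈ Q \ {p}, chebDist r p = 1 → chebDist r q = 1)
    (hconn : (proxGraph Q).Connected) :
    (proxGraph ((Q \ {p}) ∪ {q})).Connected := by
  classical
  set Q' : Set (ℤ × ℤ) := (Q \ {p}) ∪ {q} with hQ'
  have hqQ' : q ∈ Q' := Or.inr rfl
  -- the map
  have hmem : ∀ a : Q, (if (a : ℤ × ℤ) = p then q else (a : ℤ × ℤ)) ∈ Q' := by
    intro a
    by_cases h : (a : ℤ × ℤ) = p
    · simp [h, hqQ']
    · simp only [h, if_false]
      exact Or.inl ⟨a.2, h⟩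
  let f : Q → Q' := fun a => ⟨if (a : ℤ × ℤ) = p then q else (a : ℤ × ℤ), hmem a⟩
  have hadj : ∀ a b : Q, (proxGraph Q).Adj a b → (proxGraph Q').Adj (f a) (f b) := by
    intro a b hab
    have hab' : chebDist (a : ℤ × ℤ) (b : ℤ × ℤ) = 1 := hab
    have hne : (a : ℤ × ℤ) ≠ (b : ℤ × ℤ) := by
      intro h
      rw [h] at hab'
      simp [chebDist] at hab'
    show chebDist (f a : ℤ × ℤ) (f b : ℤ × ℤ) = 1
    by_cases ha : (a : ℤ × ℤ) = p
    · have hb : (b : ℤ × ℤ) ≠ p := fun h => hne (ha.trans h.symm)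
      simp only [f, ha, if_pos rfl, hb, if_neg hb]
      rw [chebDist_comm]
      exact hsafe b ⟨b.2, hb⟩ (by rw [chebDist_comm, ← ha]; exact hab')
    · by_cases hb : (b : ℤ × ℤ) = p
      · simp only [f, ha, if_neg ha, hb, if_pos rfl]
        exact hsafe a ⟨a.2, ha⟩ (by rw [← hb]; exact hab')
      · simp only [f, if_neg ha, if_neg hb]
        exact hab'
  let F : proxGraph Q →g proxGraph Q' := ⟨f, fun {a b} h => hadj a b h⟩
  have hsurj : Function.Surjective F := by
    rintro ⟨x, hx | hx⟩
    · refine ⟨⟨x, hx.1⟩, ?_⟩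
      apply Subtype.ext
      show (if x = p then q else x) = x
      exact if_neg hx.2
    · refine ⟨⟨p, hp⟩, ?_⟩
      apply Subtype.ext
      show (if p = p then q else p) = x
      rw [if_pos rfl]
      exact hx.symm
  exact hconn.map F hsurj

/-- Connectivity is preserved along any sequence of safe moves: if `P 0` is a finite
connected configuration and each `P (k+1)` (for `k < m`) is obtained from `P k` by
relocating a single agent from `p` to an unoccupied point `q` that stays linked to all
of `p`'s prior neighbors, then `P m` is connected. -/
theorem connected_after_safe_moves
    (P : ℕ → Set (ℤ × ℤ)) (m : ℕ)
    (hfin : (P 0).Finite)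
    (hconn : (proxGraph (P 0)).Connected)
    (hstep : ∀ k < m, ∃ p ∈ P k, ∃ q ∉ P k,
      P (k + 1) = (P k \ {p}) ∪ {q} ∧
      ∀ r ∈ P k \ {p}, chebDist r p = 1 → chebDist r q = 1) :
    (proxGraph (P m)).Connected := by
  induction m with
  | zero => exact hconn
  | succ n ih =>
    obtain ⟨p, hp, q, hq, hPeq, hsafe⟩ := hstep n (Nat.lt_succ_self n)
    have hconn' := ih (fun k hk => hstep k (hk.trans (Nat.lt_succ_self n)))
    rw [hPeq]
    exact safe_move_step (P n) p q hp hq hsafe hconn'
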